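/- arXiv:1304.5310 — 4 statements merged into one kernel-verified Lean document; each statement's English description precedes it below -/
import Mathlib

section
/- Suppose g solves the Poisson equation Ωg(i) = -f_i for all i ∈ T\{0} on a tree T. Then for every k ∈ T\{0} with |k| ≤ n, the identity Σ_{j ∈ E_{n+1} ∩ T_k} μ_j q_{jj*}(g_{j*} - g_j) + μ_k q_{kk*}(g_k - g_{k*}) = Σ_{j ∈ T_k ∩ T(n)} μ_j f_j holds, where T(n) is the set of vertices of layer ≤ n and E_{n+1} the set of vertices of layer n+1. -/
open Finset
open scoped Classical

structure BDTree (V : Type*) [Fintype V] where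
  root : V
  parent : V → V
  layer : V → ℕ
  q : V → V → ℝ
  parent_root : parent root = root
  layer_root : layer root = 0
  layer_parent : ∀ i, i ≠ root → layer i = layer (parent i) + 1
  reach : ∀ i, ∃ n, parent^[n] i = root
  q_pos_up : ∀ i, i ≠ root → 0 < q i (parent i)
  q_pos_down : ∀ i, i ≠ root → 0 < q (parent i) i

namespace BDTree

variable {V : Type*} [Fintype V] (T : BDTree V)

/-- The set of sons of a vertex. -/
noncomputable def sons (i : V) : Finset V :=
  Finset.univ.filter fun j => j ≠ T.root ∧ T.parent j = i

/-- The subtree `T_k` rooted at `k` (including `k`). -/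
noncomputable def subtree (k : V) : Finset V :=
  Finset.univ.filter fun j => ∃ n, T.parent^[n] j = k

/-- The path set `P(i)`: vertices (excluding the root) on the path from `i` to the root. -/
noncomputable def pathSet (i : V) : Finset V :=
  Finset.univ.filter fun k => k ≠ T.root ∧ ∃ n, T.parent^[n] i = k

/-- The symmetric measure `μ`. -/
noncomputable def mu (k : V) : ℝ :=
  ∏ j ∈ T.pathSet k, T.q (T.parent j) j / T.q j (T.parent j)

/-- The operator `Ω`. -/
noncomputable def Omega (g : V → ℝ) (i : V) : ℝ :=
  (∑ j ∈ T.sons i, T.q i j * (g j - g i)) + T.q i (T.parent i) * (g (T.parent i) - g i)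

/-- The set of non-root vertices `T \ {0}`. -/
noncomputable def nonroot : Finset V := Finset.univ.filter fun i => i ≠ T.root

/-- The Dirichlet form `D(f)`. -/
noncomputable def D (f : V → ℝ) : ℝ :=
  ∑ i ∈ T.nonroot, T.mu i * T.q i (T.parent i) * (f i - f (T.parent i)) ^ 2

/-- `μ(f²)`. -/
noncomputable def norm2 (f : V → ℝ) : ℝ := ∑ i ∈ T.nonroot, T.mu i * f i ^ 2

/-- The principal Dirichlet eigenvalue `λ₀`, via the classical variational formula. -/
noncomputable def lam0 : ℝ := sInf {r | ∃ f : V → ℝ, f T.root = 0 ∧ T.norm2 f = 1 ∧ r = T.D f}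

/-- The single-summation operator `I`. -/
noncomputable def opI (f : V → ℝ) (i : V) : ℝ :=
  (∑ j ∈ T.subtree i, T.mu j * f j) /
    (T.mu i * T.q i (T.parent i) * (f i - f (T.parent i)))

/-- The double-summation operator `II`. -/
noncomputable def opII (f : V → ℝ) (i : V) : ℝ :=
  (∑ k ∈ T.pathSet i, (1 / (T.mu k * T.q k (T.parent k))) *
      ∑ j ∈ T.subtree k, T.mu j * f j) / f i

/-- The difference-form operator `R`; at a son of the root the convention `w_0 = ∞`,
`1/∞ = 0` is used, i.e. the term `w i⁻¹` is replaced by `0`. -/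
noncomputable def R (w : V → ℝ) (i : V) : ℝ :=
  T.q i (T.parent i) * (1 - (if T.parent i = T.root then 0 else (w i)⁻¹)) +
    ∑ j ∈ T.sons i, T.q i j * (1 - w j)

/-- Membership in the test-function class `W = {w : w > 1, w_0 = ∞}` (the value at a son
of the root plays the role of `∞` and is not used by `R`). -/
def memW (w : V → ℝ) : Prop := ∀ i, i ≠ T.root → T.parent i ≠ T.root → 1 < w i

/-- `φ_j = Σ_{k∈P(j)} 1/(μ_k q_{kk*})`. -/
noncomputable def phi (j : V) : ℝ :=
  ∑ k ∈ T.pathSet j, 1 / (T.mu k * T.q k (T.parent k))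

end BDTree

namespace BDTree

variable {V : Type*} [Fintype V] (T : BDTree V)

lemma iter_root (m : ℕ) : T.parent^[m] T.root = T.root := by
  induction m with
  | zero => rfl
  | succ m ih => rw [Function.iterate_succ_apply, T.parent_root, ih]

lemma layer_iter {k : V} (hk : k ≠ T.root) :
    ∀ (m : ℕ) (j : V), T.parent^[m] j = k → T.layer j = T.layer k + m := by
  intro m
  induction m with
  | zero =>
    intro j h
    simp only [Function.iterate_zero_apply] at h
    subst h; simp
  | succ m ih =>
    intro j h
    have hj : j ≠ T.root := by
      rintro rfl
      rw [T.iter_root] at h; exact hk h.symm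
    rw [Function.iterate_succ_apply] at h
    rw [T.layer_parent j hj, ih _ h]; ring

lemma mem_subtree {j k : V} : j ∈ T.subtree k ↔ ∃ m, T.parent^[m] j = k := by
  simp [subtree]

lemma mem_sons {j k : V} : j ∈ T.sons k ↔ j ≠ T.root ∧ T.parent j = k := by
  simp [sons]

lemma mem_pathSet {j k : V} :
    j ∈ T.pathSet k ↔ j ≠ T.root ∧ ∃ m, T.parent^[m] k = j := by
  simp [pathSet]

lemma mu_pos (k : V) : 0 < T.mu k := by
  apply Finset.prod_pos
  intro j hj
  have hjr : j ≠ T.root := (T.mem_pathSet.1 hj).1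
  exact div_pos (T.q_pos_down j hjr) (T.q_pos_up j hjr)

lemma pathSet_son {j k : V} (hj : j ≠ T.root) (hp : T.parent j = k) :
    T.pathSet j = insert j (T.pathSet k) := by
  ext v
  simp only [T.mem_pathSet, Finset.mem_insert]
  constructor
  · rintro ⟨hv, m, hm⟩
    rcases m with _ | m
    · left; exact hm.symm
    · right; exact ⟨hv, m, by rwa [Function.iterate_succ_apply, hp] at hm⟩
  · rintro (rfl | ⟨hv, m, hm⟩)
    · exact ⟨hj, 0, rfl⟩
    · exact ⟨hv, m + 1, by rwa [Function.iterate_succ_apply, hp]⟩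

lemma not_mem_pathSet_self {j k : V} (hj : j ≠ T.root) (hp : T.parent j = k) :
    j ∉ T.pathSet k := by
  intro h
  obtain ⟨-, m, hm⟩ := T.mem_pathSet.1 h
  have := T.layer_iter hj m k hm
  have hlj := T.layer_parent j hj
  rw [hp] at hlj
  omega

lemma mu_son {j k : V} (hj : j ≠ T.root) (hp : T.parent j = k) :
    T.mu j = (T.q k j / T.q j k) * T.mu k := by
  unfold mu
  rw [T.pathSet_son hj hp, Finset.prod_insert (T.not_mem_pathSet_self hj hp), hp]

/-- The one-step identity obtained from the Poisson equation at `k`. -/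
lemma step (g f : V → ℝ) (hp : ∀ i, i ≠ T.root → T.Omega g i = -f i)
    (k : V) (hk : k ≠ T.root) :
    (∑ j ∈ T.sons k, T.mu j * T.q j (T.parent j) * (g (T.parent j) - g j))
      = T.mu k * f k + T.mu k * T.q k (T.parent k) * (g (T.parent k) - g k) := by
  have h := hp k hk
  unfold Omega at h
  have hsum : (∑ j ∈ T.sons k, T.mu j * T.q j (T.parent j) * (g (T.parent j) - g j))
      = ∑ j ∈ T.sons k, -(T.mu k * (T.q k j * (g j - g k))) := by
    apply Finset.sum_congr rfl
    intro j hj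
    obtain ⟨hjr, hjp⟩ := T.mem_sons.1 hj
    have hq : T.q j k ≠ 0 := by
      have := T.q_pos_up j hjr; rw [hjp] at this; exact ne_of_gt this
    rw [hjp, T.mu_son hjr hjp]
    field_simp
    ring
  rw [hsum, Finset.sum_neg_distrib, ← Finset.mul_sum]
  have h2 : (∑ j ∈ T.sons k, T.q k j * (g j - g k))
      = -f k - T.q k (T.parent k) * (g (T.parent k) - g k) := by linarith
  rw [h2]; ring

lemma subtree_filter_layer_self {k : V} (hk : k ≠ T.root) :
    (T.subtree k).filter (fun j => T.layer j ≤ T.layer k) = {k} := by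
  ext j
  simp only [Finset.mem_filter, Finset.mem_singleton, T.mem_subtree]
  constructor
  · rintro ⟨⟨m, hm⟩, hl⟩
    have := T.layer_iter hk m j hm
    have hm0 : m = 0 := by omega
    rw [hm0] at hm; exact hm
  · rintro rfl; exact ⟨⟨0, rfl⟩, le_refl _⟩

lemma subtree_filter_layer_succ {k : V} (hk : k ≠ T.root) :
    (T.subtree k).filter (fun j => T.layer j = T.layer k + 1) = T.sons k := by
  ext j
  simp only [Finset.mem_filter, T.mem_subtree, T.mem_sons]
  constructor
  · rintro ⟨⟨m, hm⟩, hl⟩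
    have := T.layer_iter hk m j hm
    have hm1 : m = 1 := by omega
    rw [hm1] at hm
    have hjr : j ≠ T.root := by
      rintro rfl; rw [T.iter_root] at hm; exact hk hm.symm
    exact ⟨hjr, hm⟩
  · rintro ⟨hjr, hjp⟩
    refine ⟨⟨1, hjp⟩, ?_⟩
    rw [T.layer_parent j hjr, hjp]

lemma fiber_eq_sons {k v : V} (hk : k ≠ T.root) (m : ℕ)
    (hv : v ∈ (T.subtree k).filter (fun x => T.layer x = m)) :
    ((T.subtree k).filter (fun j => T.layer j = m + 1)).filter
      (fun j => T.parent j = v) = T.sons v := by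
  obtain ⟨hvs, hvl⟩ := Finset.mem_filter.1 hv
  obtain ⟨t, ht⟩ := T.mem_subtree.1 hvs
  ext j
  simp only [Finset.mem_filter, T.mem_subtree, T.mem_sons]
  constructor
  · rintro ⟨⟨-, hl⟩, hpj⟩
    have hjr : j ≠ T.root := by
      rintro rfl
      rw [T.layer_root] at hl; omega
    exact ⟨hjr, hpj⟩
  · rintro ⟨hjr, hjp⟩
    refine ⟨⟨⟨t + 1, ?_⟩, ?_⟩, hjp⟩
    · rw [Function.iterate_succ_apply, hjp, ht]
    · rw [T.layer_parent j hjr, hjp, hvl]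

end BDTree

/-- the summation identity for solutions of the Poisson equation `Ω g = -f`. -/
theorem stmt2 {V : Type*} [Fintype V] (T : BDTree V) (g f : V → ℝ)
    (hpoisson : ∀ i, i ≠ T.root → T.Omega g i = -f i) (n : ℕ) (k : V)
    (hk : k ≠ T.root) (hkn : T.layer k ≤ n) :
    (∑ j ∈ (T.subtree k).filter (fun j => T.layer j = n + 1),
        T.mu j * T.q j (T.parent j) * (g (T.parent j) - g j))
      + T.mu k * T.q k (T.parent k) * (g k - g (T.parent k))
      = ∑ j ∈ (T.subtree k).filter (fun j => T.layer j ≤ n), T.mu j * f j := by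
  induction n, hkn using Nat.le_induction with
  | base =>
    rw [T.subtree_filter_layer_self hk, T.subtree_filter_layer_succ hk,
        T.step g f hpoisson k hk, Finset.sum_singleton]
    ring
  | succ n hn ih =>
    have hsplit : (∑ j ∈ (T.subtree k).filter (fun j => T.layer j ≤ n + 1), T.mu j * f j)
        = (∑ j ∈ (T.subtree k).filter (fun j => T.layer j ≤ n), T.mu j * f j)
          + ∑ j ∈ (T.subtree k).filter (fun j => T.layer j = n + 1), T.mu j * f j := by
      rw [← Finset.sum_union (by
        rw [Finset.disjoint_left]
        intro j h1 h2
        simp only [Finset.mem_filter] at h1 h2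
        omega)]
      apply Finset.sum_congr _ (fun _ _ => rfl)
      ext j
      simp only [Finset.mem_union, Finset.mem_filter]
      by_cases hj : j ∈ T.subtree k <;> simp [hj] <;> omega
    have hkey : (∑ j ∈ (T.subtree k).filter (fun j => T.layer j = n + 1 + 1),
          T.mu j * T.q j (T.parent j) * (g (T.parent j) - g j))
        = ∑ v ∈ (T.subtree k).filter (fun x => T.layer x = n + 1),
            ∑ j ∈ T.sons v, T.mu j * T.q j (T.parent j) * (g (T.parent j) - g j) := by
      rw [← Finset.sum_fiberwise_of_maps_to (g := T.parent) (t := (T.subtree k).filter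
            (fun x => T.layer x = n + 1)) ?_ _]
      · apply Finset.sum_congr rfl
        intro v hv
        rw [T.fiber_eq_sons hk (n + 1) hv]
      · intro j hj
        obtain ⟨hjs, hjl⟩ := Finset.mem_filter.1 hj
        obtain ⟨m, hm⟩ := T.mem_subtree.1 hjs
        have hjr : j ≠ T.root := by
          rintro rfl; rw [T.layer_root] at hjl; omega
        have hlay := T.layer_iter hk m j hm
        rcases m with _ | m
        · simp only [Function.iterate_zero_apply] at hm
          subst hm; omega
        · rw [Function.iterate_succ_apply] at hm
          refine Finset.mem_filter.2 ⟨T.mem_subtree.2 ⟨m, hm⟩, ?_⟩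
          have := T.layer_parent j hjr
          omega
    have hstep : ∀ v ∈ (T.subtree k).filter (fun x => T.layer x = n + 1),
        (∑ j ∈ T.sons v, T.mu j * T.q j (T.parent j) * (g (T.parent j) - g j))
        = T.mu v * f v + T.mu v * T.q v (T.parent v) * (g (T.parent v) - g v) := by
      intro v hv
      obtain ⟨-, hvl⟩ := Finset.mem_filter.1 hv
      have hvr : v ≠ T.root := by
        rintro rfl; rw [T.layer_root] at hvl; omega
      exact T.step g f hpoisson v hvr
    rw [Finset.sum_congr rfl hstep, Finset.sum_add_distrib] at hkey
    rw [hsplit, hkey]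
    linarith [ih]
end

section
/- For any f ∈ F_I (i.e., f_0 = 0 and f_i > f_{i*} for all i ∈ T\{0}), one has sup_{j∈T\{0}} II_j(f) ≤ sup_{k∈T\{0}} I_k(f), where I_k(f) = (1/(μ_k q_{kk*}(f_k - f_{k*}))) Σ_{j∈T_k} μ_j f_j and II_j(f) = (1/f_j) Σ_{k∈P(j)} (1/(μ_k q_{kk*})) Σ_{i∈T_k} μ_i f_i. -/
open Finset
open scoped Classical

section Aux

variable {V : Type*} [Fintype V] (T : BDTree V)

lemma iter_root (n : ℕ) : T.parent^[n] T.root = T.root := by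
  induction n with
  | zero => rfl
  | succ n ih => rw [Function.iterate_succ_apply, T.parent_root, ih]

lemma layer_parent_le (i : V) : T.layer (T.parent i) ≤ T.layer i := by
  by_cases h : i = T.root
  · subst h; rw [T.parent_root]
  · rw [T.layer_parent i h]; omega

lemma layer_iter_le (n : ℕ) (i : V) : T.layer (T.parent^[n] i) ≤ T.layer i := by
  induction n generalizing i with
  | zero => rfl
  | succ n ih =>
      rw [Function.iterate_succ_apply]
      exact (ih (T.parent i)).trans (layer_parent_le T i)

lemma pathSet_root : T.pathSet T.root = ∅ := by
  ext k
  simp only [BDTree.pathSet, Finset.mem_filter, Finset.mem_univ, true_and,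
    Finset.notMem_empty, iff_false]
  rintro ⟨hk, n, hn⟩
  exact hk ((iter_root T n ▸ hn).symm)

lemma not_mem_pathSet_parent {j : V} (hj : j ≠ T.root) : j ∉ T.pathSet (T.parent j) := by
  simp only [BDTree.pathSet, Finset.mem_filter, Finset.mem_univ, true_and, not_and]
  rintro - ⟨n, hn⟩
  have h1 := layer_iter_le T n (T.parent j)
  rw [hn] at h1
  have := T.layer_parent j hj
  omega

lemma pathSet_succ {j : V} (hj : j ≠ T.root) :
    T.pathSet j = insert j (T.pathSet (T.parent j)) := by
  ext k
  simp only [BDTree.pathSet, Finset.mem_filter, Finset.mem_univ, true_and,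
    Finset.mem_insert]
  constructor
  · rintro ⟨hk, n, hn⟩
    cases n with
    | zero => exact Or.inl hn.symm
    | succ n => exact Or.inr ⟨hk, n, by rwa [Function.iterate_succ_apply] at hn⟩
  · rintro (rfl | ⟨hk, n, hn⟩)
    · exact ⟨hj, 0, rfl⟩
    · exact ⟨hk, n + 1, by rwa [Function.iterate_succ_apply]⟩

lemma mem_pathSet_ne_root {k j : V} (hk : k ∈ T.pathSet j) : k ≠ T.root :=
  (Finset.mem_filter.mp hk).2.1

lemma mu_pos (k : V) : 0 < T.mu k := by
  apply Finset.prod_pos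
  intro j hj
  have hj' := mem_pathSet_ne_root T hj
  exact div_pos (T.q_pos_down j hj') (T.q_pos_up j hj')

lemma telescope (f : V → ℝ) (hf0 : f T.root = 0) :
    ∀ n (j : V), T.layer j = n → f j = ∑ k ∈ T.pathSet j, (f k - f (T.parent k)) := by
  intro n
  induction n using Nat.strong_induction_on with
  | _ n ih =>
    intro j hn
    by_cases hj : j = T.root
    · subst hj; rw [pathSet_root, Finset.sum_empty, hf0]
    · rw [pathSet_succ T hj, Finset.sum_insert (not_mem_pathSet_parent T hj)]
      have hl := T.layer_parent j hj
      rw [← ih (T.layer (T.parent j)) (by omega) (T.parent j) rfl]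
      ring

lemma f_pos (f : V → ℝ) (hf0 : f T.root = 0)
    (hfinc : ∀ i, i ≠ T.root → f (T.parent i) < f i) :
    ∀ n (j : V), T.layer j = n → j ≠ T.root → 0 < f j := by
  intro n
  induction n using Nat.strong_induction_on with
  | _ n ih =>
    intro j hn hj
    have hl := T.layer_parent j hj
    by_cases hp : T.parent j = T.root
    · have := hfinc j hj; rw [hp, hf0] at this; exact this
    · exact (ih (T.layer (T.parent j)) (by omega) _ rfl hp).trans (hfinc j hj)

end Aux

/-- for `f ∈ F_I`, `sup_j II_j(f) ≤ sup_k I_k(f)`. -/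
theorem stmt5 {V : Type*} [Fintype V] (T : BDTree V) (hne : T.nonroot.Nonempty)
    (f : V → ℝ) (hf0 : f T.root = 0)
    (hfinc : ∀ i, i ≠ T.root → f (T.parent i) < f i) :
    T.nonroot.sup' hne (fun j => T.opII f j) ≤ T.nonroot.sup' hne fun k => T.opI f k := by
  apply Finset.sup'_le
  intro j hj
  have hjn : j ≠ T.root := (Finset.mem_filter.mp hj).2
  set M := T.nonroot.sup' hne fun k => T.opI f k with hM
  have hfj : 0 < f j := f_pos T f hf0 hfinc _ j rfl hjn
  rw [BDTree.opII, div_le_iff₀ hfj]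
  have htel : f j = ∑ k ∈ T.pathSet j, (f k - f (T.parent k)) :=
    telescope T f hf0 _ j rfl
  calc ∑ k ∈ T.pathSet j, (1 / (T.mu k * T.q k (T.parent k))) *
        ∑ i ∈ T.subtree k, T.mu i * f i
      ≤ ∑ k ∈ T.pathSet j, M * (f k - f (T.parent k)) := by
        apply Finset.sum_le_sum
        intro k hk
        have hk' : k ≠ T.root := mem_pathSet_ne_root T hk
        have hdk : 0 < f k - f (T.parent k) := sub_pos.mpr (hfinc k hk')
        have hq : 0 < T.q k (T.parent k) := T.q_pos_up k hk'
        have hmu : 0 < T.mu k := mu_pos T k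
        have hIk : T.opI f k ≤ M := by
          apply Finset.le_sup'
          simp [BDTree.nonroot, hk']
        have heq : (1 / (T.mu k * T.q k (T.parent k))) *
            ∑ i ∈ T.subtree k, T.mu i * f i
            = T.opI f k * (f k - f (T.parent k)) := by
          rw [BDTree.opI]
          field_simp
        rw [heq]
        exact mul_le_mul_of_nonneg_right hIk hdk.le
    _ = M * f j := by rw [← Finset.mul_sum, ← htel]
end

section
/- Let f ∈ F_{II} with II(f) < ∞ and set g = f·II(f), i.e., g_i = Σ_{k∈P(i)} (1/(μ_k q_{kk*})) Σ_{j∈T_k} μ_j f_j with g_0 = 0. Then g ∈ F_I (g_i > g_{i*} for all i ∈ T\{0}), g_i - g_{i*} = (1/(μ_i q_{ii*})) Σ_{j∈T_i} μ_j f_j, and inf_{i∈T\{0}} I_i(g)^{-1} ≥ inf_{k∈T\{0}} II_k(f)^{-1}. -/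
open Finset
open scoped Classical

namespace BDTree

variable {V : Type*} [Fintype V] (T : BDTree V)

lemma parent_iterate_root (n : ℕ) : T.parent^[n] T.root = T.root := by
  induction n with
  | zero => rfl
  | succ n ih => rw [Function.iterate_succ_apply', ih, T.parent_root]

lemma pathSet_root : T.pathSet T.root = ∅ := by
  ext k
  simp only [pathSet, mem_filter, mem_univ, true_and, Finset.notMem_empty, iff_false]
  rintro ⟨hk, n, hn⟩
  exact hk (by rw [T.parent_iterate_root] at hn; exact hn.symm)

lemma layer_iterate_le (j : V) (n : ℕ) : T.layer (T.parent^[n] j) ≤ T.layer j := by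
  induction n with
  | zero => rfl
  | succ n ih =>
    rw [Function.iterate_succ_apply']
    set m := T.parent^[n] j with hm
    by_cases h : m = T.root
    · rw [h, T.parent_root, T.layer_root]; omega
    · have := T.layer_parent m h; omega

lemma not_mem_pathSet_parent (i : V) (hi : i ≠ T.root) : i ∉ T.pathSet (T.parent i) := by
  simp only [pathSet, mem_filter, mem_univ, true_and, not_and]
  rintro _ ⟨n, hn⟩
  have h1 := T.layer_iterate_le (T.parent i) n
  rw [hn] at h1
  have := T.layer_parent i hi
  omega

lemma mem_pathSet_self (i : V) (hi : i ≠ T.root) : i ∈ T.pathSet i := by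
  simp only [pathSet, mem_filter, mem_univ, true_and]
  exact ⟨hi, 0, rfl⟩

lemma pathSet_eq (i : V) (hi : i ≠ T.root) :
    T.pathSet i = insert i (T.pathSet (T.parent i)) := by
  ext k
  simp only [pathSet, mem_filter, mem_univ, true_and, mem_insert]
  constructor
  · rintro ⟨hk, n, hn⟩
    cases n with
    | zero => left; exact hn.symm
    | succ n => right; exact ⟨hk, n, by rwa [Function.iterate_succ_apply] at hn⟩
  · rintro (rfl | ⟨hk, n, hn⟩)
    · exact ⟨hi, 0, rfl⟩
    · exact ⟨hk, n + 1, by rwa [Function.iterate_succ_apply]⟩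

lemma mem_subtree_self (k : V) : k ∈ T.subtree k := by
  simp only [subtree, mem_filter, mem_univ, true_and]
  exact ⟨0, rfl⟩

lemma subtree_ne_root {k j : V} (hk : k ≠ T.root) (hj : j ∈ T.subtree k) : j ≠ T.root := by
  rintro rfl
  simp only [subtree, mem_filter, mem_univ, true_and] at hj
  obtain ⟨n, hn⟩ := hj
  exact hk (by rw [T.parent_iterate_root] at hn; exact hn.symm)

lemma muq_pos (k : V) (hk : k ≠ T.root) : 0 < T.mu k * T.q k (T.parent k) :=
  mul_pos (T.mu_pos k) (T.q_pos_up k hk)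

end BDTree

/-- for `f ∈ F_II`, `g = f·II(f)` belongs to `F_I`, satisfies the
difference identity, and `inf I(g)⁻¹ ≥ inf II(f)⁻¹`. -/
theorem stmt6 {V : Type*} [Fintype V] (T : BDTree V) (hne : T.nonroot.Nonempty)
    (f : V → ℝ) (hf0 : f T.root = 0) (hfpos : ∀ i, i ≠ T.root → 0 < f i)
    (g : V → ℝ)
    (hg : ∀ i, g i = ∑ k ∈ T.pathSet i,
        (1 / (T.mu k * T.q k (T.parent k))) * ∑ j ∈ T.subtree k, T.mu j * f j) :
    g T.root = 0 ∧
    (∀ i, i ≠ T.root → g (T.parent i) < g i) ∧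
    (∀ i, i ≠ T.root → g i - g (T.parent i)
        = (1 / (T.mu i * T.q i (T.parent i))) * ∑ j ∈ T.subtree i, T.mu j * f j) ∧
    T.nonroot.inf' hne (fun k => (T.opII f k)⁻¹) ≤
      T.nonroot.inf' hne fun i => (T.opI g i)⁻¹ := by
  -- positivity of subtree sums
  have hS : ∀ k, k ≠ T.root → 0 < ∑ j ∈ T.subtree k, T.mu j * f j := by
    intro k hk
    apply Finset.sum_pos
    · intro j hj
      exact mul_pos (T.mu_pos j) (hfpos j (T.subtree_ne_root hk hj))
    · exact ⟨k, T.mem_subtree_self k⟩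
  have hg0 : g T.root = 0 := by rw [hg, T.pathSet_root, Finset.sum_empty]
  have hdiff : ∀ i, i ≠ T.root → g i - g (T.parent i)
      = (1 / (T.mu i * T.q i (T.parent i))) * ∑ j ∈ T.subtree i, T.mu j * f j := by
    intro i hi
    rw [hg i, hg (T.parent i), T.pathSet_eq i hi,
      Finset.sum_insert (T.not_mem_pathSet_parent i hi)]
    ring
  have hmono : ∀ i, i ≠ T.root → g (T.parent i) < g i := by
    intro i hi
    have h1 : 0 < (1 / (T.mu i * T.q i (T.parent i))) * ∑ j ∈ T.subtree i, T.mu j * f j :=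
      mul_pos (one_div_pos.mpr (T.muq_pos i hi)) (hS i hi)
    linarith [hdiff i hi]
  have hgpos : ∀ i, i ≠ T.root → 0 < g i := by
    intro i hi
    rw [hg i]
    apply Finset.sum_pos
    · intro k hk
      have hkr : k ≠ T.root := (Finset.mem_filter.mp hk).2.1
      exact mul_pos (one_div_pos.mpr (T.muq_pos k hkr)) (hS k hkr)
    · exact ⟨i, T.mem_pathSet_self i hi⟩
  refine ⟨hg0, hmono, hdiff, ?_⟩
  apply Finset.le_inf'
  intro i hi
  have hir : i ≠ T.root := (Finset.mem_filter.mp hi).2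
  set c := T.nonroot.inf' hne (fun k => (T.opII f k)⁻¹) with hc
  -- (opII f k)⁻¹ = f k / g k for nonroot k
  have hII : ∀ k, k ≠ T.root → (T.opII f k)⁻¹ = f k / g k := by
    intro k hk
    rw [BDTree.opII, ← hg k, inv_div]
  -- the key bound: c * g j ≤ f j for nonroot j
  have hkey : ∀ j, j ≠ T.root → c * g j ≤ f j := by
    intro j hj
    have h1 : c ≤ f j / g j := by
      rw [← hII j hj]
      exact Finset.inf'_le _ (by simp [BDTree.nonroot, hj])
    exact (le_div_iff₀ (hgpos j hj)).mp h1
  -- compute (opI g i)⁻¹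
  have hden : T.mu i * T.q i (T.parent i) * (g i - g (T.parent i))
      = ∑ j ∈ T.subtree i, T.mu j * f j := by
    rw [hdiff i hir, one_div, ← mul_assoc, mul_inv_cancel₀ (T.muq_pos i hir).ne', one_mul]
  have hG : 0 < ∑ j ∈ T.subtree i, T.mu j * g j := by
    apply Finset.sum_pos
    · intro j hj
      exact mul_pos (T.mu_pos j) (hgpos j (T.subtree_ne_root hir hj))
    · exact ⟨i, T.mem_subtree_self i⟩
  have hI : (T.opI g i)⁻¹
      = (∑ j ∈ T.subtree i, T.mu j * f j) / (∑ j ∈ T.subtree i, T.mu j * g j) := by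
    rw [BDTree.opI, inv_div, hden]
  rw [hI, le_div_iff₀ hG]
  calc c * ∑ j ∈ T.subtree i, T.mu j * g j
      = ∑ j ∈ T.subtree i, T.mu j * (c * g j) := by rw [Finset.mul_sum]; congr 1; ext j; ring
    _ ≤ ∑ j ∈ T.subtree i, T.mu j * f j := by
        apply Finset.sum_le_sum
        intro j hj
        exact mul_le_mul_of_nonneg_left (hkey j (T.subtree_ne_root hir hj)) (T.mu_pos j).le
end

section
/- (Difference-form lower bound.) For every w ∈ W = {w : w > 1 on T\{0}, w_0 = ∞} with R(w) > 0 on T\{0}, one has inf_{i∈T\{0}} R_i(w) ≤ λ_0. Hence sup_{w∈W} inf_{i∈T\{0}} R_i(w) ≤ λ_0 and, combined with the converse inequality, sup_{w∈W} inf_{i∈T\{0}} R_i(w) = λ_0. -/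
open Finset
open scoped Classical

namespace Stmt18Proof
section Aux
variable {V : Type*} [Fintype V] (T : BDTree V)

-- Part A: basic structural lemmas
lemma iter_root (n : ℕ) : T.parent^[n] T.root = T.root := by
  induction n with
  | zero => rfl
  | succ n ih => rw [Function.iterate_succ_apply', ih, T.parent_root]

lemma no_cycle {i : V} (hi : i ≠ T.root) (n : ℕ) : T.parent^[n + 1] i ≠ i := by
  intro h
  obtain ⟨m, hm⟩ := T.reach i
  have hk : ∀ k : ℕ, T.parent^[k * (n + 1)] i = i := by
    intro k
    induction k with
    | zero => simp
    | succ k ih => rw [Nat.succ_mul, Function.iterate_add_apply, h, ih]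
  have h1 : T.parent^[m * (n + 1)] i = T.root := by
    have : m * (n + 1) = (m * (n + 1) - m) + m := by
      have : m ≤ m * (n + 1) := Nat.le_mul_of_pos_right m (Nat.succ_pos n)
      omega
    rw [this, Function.iterate_add_apply, hm, iter_root]
  exact hi ((hk m ▸ h1 : i = T.root))

lemma mem_nonroot {i : V} : i ∈ T.nonroot ↔ i ≠ T.root := by
  simp [BDTree.nonroot]

lemma mem_sons {i j : V} : j ∈ T.sons i ↔ j ≠ T.root ∧ T.parent j = i := by
  simp [BDTree.sons]

lemma mem_subtree {a j : V} : j ∈ T.subtree a ↔ ∃ n, T.parent^[n] j = a := by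
  simp [BDTree.subtree]

lemma mem_pathSet {i k : V} : k ∈ T.pathSet i ↔ k ≠ T.root ∧ ∃ n, T.parent^[n] i = k := by
  simp [BDTree.pathSet]

lemma mem_subtree_self (a : V) : a ∈ T.subtree a := (mem_subtree T).2 ⟨0, rfl⟩

lemma root_not_mem_subtree {a : V} (ha : a ≠ T.root) : T.root ∉ T.subtree a := by
  rw [mem_subtree]
  rintro ⟨n, hn⟩
  exact ha ((iter_root T n) ▸ hn.symm)

lemma subtree_nonroot {a j : V} (ha : a ≠ T.root) (hj : j ∈ T.subtree a) : j ≠ T.root := by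
  rintro rfl; exact root_not_mem_subtree T ha hj

lemma parent_mem_subtree {a j : V} (ha : a ≠ T.root) (hj : j ∈ T.subtree a) (hja : j ≠ a) :
    T.parent j ∈ T.subtree a := by
  obtain ⟨n, hn⟩ := (mem_subtree T).1 hj
  cases n with
  | zero => exact absurd hn hja
  | succ n => exact (mem_subtree T).2 ⟨n, by rw [← Function.iterate_succ_apply]; exact hn⟩

lemma subtree_trans {a i j : V} (hj : j ∈ T.subtree i) (hi : i ∈ T.subtree a) :
    j ∈ T.subtree a := by
  obtain ⟨n, hn⟩ := (mem_subtree T).1 hj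
  obtain ⟨m, hm⟩ := (mem_subtree T).1 hi
  exact (mem_subtree T).2 ⟨m + n, by rw [Function.iterate_add_apply, hn, hm]⟩

lemma sons_mem_subtree {a j k : V} (hj : j ∈ T.subtree a) (hk : k ∈ T.sons j) :
    k ∈ T.subtree a := by
  obtain ⟨hk1, hk2⟩ := (mem_sons T).1 hk
  exact subtree_trans T ((mem_subtree T).2 ⟨1, hk2⟩) hj

lemma sons_ne_top {a j k : V} (ha : a ≠ T.root) (hj : j ∈ T.subtree a) (hk : k ∈ T.sons j) :
    k ≠ a := by
  rintro rfl
  obtain ⟨hk1, hk2⟩ := (mem_sons T).1 hk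
  obtain ⟨n, hn⟩ := (mem_subtree T).1 hj
  exact no_cycle T ha n (by rw [Function.iterate_succ_apply, hk2]; exact hn)

lemma pathSet_root : T.pathSet T.root = ∅ := by
  ext k
  simp only [mem_pathSet, Finset.notMem_empty, iff_false, not_and]
  rintro hk ⟨n, hn⟩
  exact hk ((iter_root T n) ▸ hn.symm)

lemma pathSet_insert {i : V} (hi : i ≠ T.root) :
    T.pathSet i = insert i (T.pathSet (T.parent i)) := by
  ext k
  simp only [mem_pathSet, Finset.mem_insert]
  constructor
  · rintro ⟨hk, n, hn⟩
    cases n with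
    | zero => exact Or.inl hn.symm
    | succ n => exact Or.inr ⟨hk, n, by rw [← Function.iterate_succ_apply]; exact hn⟩
  · rintro (rfl | ⟨hk, n, hn⟩)
    · exact ⟨hi, 0, rfl⟩
    · exact ⟨hk, n + 1, by rw [Function.iterate_succ_apply]; exact hn⟩

lemma self_not_mem_pathSet_parent {i : V} (hi : i ≠ T.root) : i ∉ T.pathSet (T.parent i) := by
  rw [mem_pathSet]
  rintro ⟨-, n, hn⟩
  exact no_cycle T hi n (by rw [Function.iterate_succ_apply]; exact hn)

lemma mu_pos (k : V) : 0 < T.mu k := by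
  apply Finset.prod_pos
  intro j hj
  have hj' := ((mem_pathSet T).1 hj).1
  exact div_pos (T.q_pos_down j hj') (T.q_pos_up j hj')

lemma mu_parent_eq {i : V} (hi : i ≠ T.root) :
    T.mu i * T.q i (T.parent i) = T.mu (T.parent i) * T.q (T.parent i) i := by
  have h1 : T.mu i = T.mu (T.parent i) * (T.q (T.parent i) i / T.q i (T.parent i)) := by
    rw [BDTree.mu, pathSet_insert T hi, Finset.prod_insert (self_not_mem_pathSet_parent T hi)]
    rw [BDTree.mu]; ring
  rw [h1]
  have := (T.q_pos_up i hi).ne'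
  field_simp

-- Part B: sum partition lemmas
lemma sons_pairwise_disjoint (s : Finset V) :
    (s : Set V).PairwiseDisjoint T.sons := by
  intro k1 _ k2 _ hne
  apply Finset.disjoint_left.2
  intro j hj1 hj2
  exact hne (((mem_sons T).1 hj1).2.symm.trans ((mem_sons T).1 hj2).2)

lemma sum_nonroot_sons (H : V → ℝ) :
    ∑ i ∈ T.nonroot, H i = ∑ k ∈ Finset.univ, ∑ i ∈ T.sons k, H i := by
  rw [← Finset.sum_biUnion (sons_pairwise_disjoint T _)]
  apply Finset.sum_congr _ (fun _ _ => rfl)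
  ext j
  simp only [Finset.mem_biUnion, Finset.mem_univ, true_and, mem_sons T, mem_nonroot T]
  constructor
  · intro h; exact ⟨T.parent j, h, rfl⟩
  · rintro ⟨k, hk, -⟩; exact hk

lemma sum_subtree_sons {a : V} (ha : a ≠ T.root) (H : V → ℝ) :
    ∑ j ∈ T.subtree a, ∑ k ∈ T.sons j, H k = ∑ k ∈ (T.subtree a).erase a, H k := by
  rw [← Finset.sum_biUnion (sons_pairwise_disjoint T _)]
  apply Finset.sum_congr _ (fun _ _ => rfl)
  ext k
  simp only [Finset.mem_biUnion, Finset.mem_erase]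
  constructor
  · rintro ⟨j, hj, hk⟩
    exact ⟨sons_ne_top T ha hj hk, sons_mem_subtree T hj hk⟩
  · rintro ⟨hka, hk⟩
    have hknr : k ≠ T.root := subtree_nonroot T ha hk
    exact ⟨T.parent k, parent_mem_subtree T ha hk hka, (mem_sons T).2 ⟨hknr, rfl⟩⟩

-- Part C: Barta-type inequality via ground state transform
lemma nonroot_eq_erase : T.nonroot = Finset.univ.erase T.root := by
  ext i; simp [mem_nonroot T, Finset.mem_erase]

lemma barta (u f : V → ℝ) (hu0 : u T.root = 0) (hup : ∀ i, i ≠ T.root → 0 < u i)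
    (hf0 : f T.root = 0) :
    ∑ i ∈ T.nonroot, T.mu i * (-(T.Omega u i) / u i) * f i ^ 2 ≤ T.D f := by
  classical
  set g : V → ℝ := fun i => f i / u i with hg
  have hfu : ∀ i, f i = u i * g i := by
    intro i
    by_cases hi : i = T.root
    · subst hi; simp [hg, hf0]
    · have := (hup i hi).ne'
      simp only [hg]; field_simp
  have hun : ∀ i, 0 ≤ u i := by
    intro i; by_cases hi : i = T.root
    · subst hi; simp [hu0]
    · exact (hup i hi).le
  set E : V → ℝ := fun i => T.mu i * T.q i (T.parent i) * (u i - u (T.parent i)) with hE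
  set P : V → ℝ := fun i => u i * g i ^ 2 with hP
  have key : T.D f =
      (∑ i ∈ T.nonroot, T.mu i * T.q i (T.parent i) * (u i * u (T.parent i)) *
        (g i - g (T.parent i)) ^ 2)
      + ∑ i ∈ T.nonroot, (E i * P i - E i * P (T.parent i)) := by
    rw [BDTree.D, ← Finset.sum_add_distrib]
    apply Finset.sum_congr rfl
    intro i _
    rw [hfu i, hfu (T.parent i)]
    simp only [hE, hP]
    ring
  have h2 : ∑ i ∈ T.nonroot, E i * P (T.parent i)
      = ∑ i ∈ T.nonroot, P i * ∑ j ∈ T.sons i, E j := by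
    rw [sum_nonroot_sons T (fun i => E i * P (T.parent i))]
    have hin : ∀ k, ∑ i ∈ T.sons k, E i * P (T.parent i) = P k * ∑ i ∈ T.sons k, E i := by
      intro k
      rw [Finset.mul_sum]
      apply Finset.sum_congr rfl
      intro i hi
      rw [((mem_sons T).1 hi).2]
      ring
    rw [Finset.sum_congr rfl (fun k _ => hin k),
      ← Finset.add_sum_erase _ _ (Finset.mem_univ T.root), ← nonroot_eq_erase T]
    have : P T.root = 0 := by simp [hP, hu0]
    rw [this, zero_mul, zero_add]
  have h3 : ∀ i ∈ T.nonroot, E i * P i - P i * (∑ j ∈ T.sons i, E j)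
      = T.mu i * (-(T.Omega u i) / u i) * f i ^ 2 := by
    intro i hi
    have hi' := (mem_nonroot T).1 hi
    have hsons : ∑ j ∈ T.sons i, E j = T.mu i * ∑ j ∈ T.sons i, T.q i j * (u j - u i) := by
      rw [Finset.mul_sum]
      apply Finset.sum_congr rfl
      intro j hj
      obtain ⟨hj1, hj2⟩ := (mem_sons T).1 hj
      simp only [hE]
      rw [show T.mu j * T.q j (T.parent j) * (u j - u (T.parent j))
          = T.mu j * T.q j (T.parent j) * (u j - u i) by rw [hj2],
        mu_parent_eq T hj1, hj2]
      ring
    rw [hsons, BDTree.Omega, hfu i]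
    have hune := (hup i hi').ne'
    simp only [hE, hP]
    field_simp
    ring
  have hnn : 0 ≤ ∑ i ∈ T.nonroot, T.mu i * T.q i (T.parent i) * (u i * u (T.parent i)) *
      (g i - g (T.parent i)) ^ 2 := by
    apply Finset.sum_nonneg
    intro i hi
    have hi' := (mem_nonroot T).1 hi
    have h1 : (0:ℝ) ≤ T.mu i * T.q i (T.parent i) :=
      (mul_pos (mu_pos T i) (T.q_pos_up i hi')).le
    have h2 : (0:ℝ) ≤ u i * u (T.parent i) := mul_nonneg (hun i) (hun (T.parent i))
    positivity
  calc ∑ i ∈ T.nonroot, T.mu i * (-(T.Omega u i) / u i) * f i ^ 2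
      = ∑ i ∈ T.nonroot, (E i * P i - P i * ∑ j ∈ T.sons i, E j) :=
        (Finset.sum_congr rfl h3).symm
    _ = ∑ i ∈ T.nonroot, (E i * P i - E i * P (T.parent i)) := by
        rw [Finset.sum_sub_distrib, Finset.sum_sub_distrib, h2]
    _ ≤ T.D f := by rw [key]; linarith

-- Part D : part 1, inf R(w) ≤ λ₀ for all w ∈ W
lemma D_nonneg (f : V → ℝ) : 0 ≤ T.D f := by
  apply Finset.sum_nonneg
  intro i hi
  have hi' := (mem_nonroot T).1 hi
  have h1 : (0:ℝ) ≤ T.mu i * T.q i (T.parent i) :=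
    (mul_pos (mu_pos T i) (T.q_pos_up i hi')).le
  positivity

lemma lam0_set_nonempty (hne : T.nonroot.Nonempty) :
    {r | ∃ f : V → ℝ, f T.root = 0 ∧ T.norm2 f = 1 ∧ r = T.D f}.Nonempty := by
  obtain ⟨i0, hi0⟩ := hne
  have hi0' := (mem_nonroot T).1 hi0
  refine ⟨_, fun j => if j = i0 then (Real.sqrt (T.mu i0))⁻¹ else 0, by
    simp [Ne.symm hi0'], ?_, rfl⟩
  rw [BDTree.norm2, Finset.sum_eq_single_of_mem i0 hi0 (fun j _ hj => by simp [hj])]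
  rw [if_pos rfl, ← Real.sqrt_inv, Real.sq_sqrt (inv_nonneg.2 (mu_pos T i0).le),
    mul_inv_cancel₀ (mu_pos T i0).ne']

lemma lam0_nonneg (hne : T.nonroot.Nonempty) : 0 ≤ T.lam0 := by
  apply le_csInf (lam0_set_nonempty T hne)
  rintro r ⟨f, -, -, rfl⟩
  exact D_nonneg T f

lemma part1' (hne : T.nonroot.Nonempty) (w : V → ℝ) (hw : T.memW w) :
    T.nonroot.inf' hne (fun i => T.R w i) ≤ T.lam0 := by
  classical
  apply le_csInf (lam0_set_nonempty T hne)
  rintro r ⟨f, hf0, hfn, rfl⟩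
  set u : V → ℝ := fun i =>
    if i = T.root then 0
    else ∏ k ∈ (T.pathSet i).filter (fun k => T.parent k ≠ T.root), w k with hu
  have hu0 : u T.root = 0 := by simp [hu]
  have hupos : ∀ i, i ≠ T.root → 0 < u i := by
    intro i hi
    simp only [hu, if_neg hi]
    apply Finset.prod_pos
    intro k hk
    obtain ⟨hk1, hk2⟩ := Finset.mem_filter.1 hk
    exact lt_trans one_pos (hw k ((mem_pathSet T).1 hk1).1 hk2)
  have hsons : ∀ i, i ≠ T.root → ∀ j ∈ T.sons i, u j = u i * w j := by
    intro i hi j hj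
    obtain ⟨hj1, hj2⟩ := (mem_sons T).1 hj
    have hins : T.pathSet j = insert j (T.pathSet i) := by
      rw [pathSet_insert T hj1, hj2]
    have hnm : j ∉ (T.pathSet i).filter (fun k => T.parent k ≠ T.root) := by
      intro hmem
      exact self_not_mem_pathSet_parent T hj1 (hj2 ▸ (Finset.mem_filter.1 hmem).1)
    simp only [hu, if_neg hj1, if_neg hi, hins]
    rw [Finset.filter_insert, if_pos (by rw [hj2]; exact hi), Finset.prod_insert hnm]
    ring
  have hstep : ∀ i, i ≠ T.root →
      u (T.parent i) = u i * (if T.parent i = T.root then 0 else (w i)⁻¹) := by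
    intro i hi
    by_cases hpr : T.parent i = T.root
    · simp [hpr, hu0]
    · have hwi := hw i hi hpr
      have hwine : w i ≠ 0 := by linarith
      have hins : T.pathSet i = insert i (T.pathSet (T.parent i)) := pathSet_insert T hi
      have hnm : i ∉ (T.pathSet (T.parent i)).filter (fun k => T.parent k ≠ T.root) :=
        fun hmem => self_not_mem_pathSet_parent T hi (Finset.mem_filter.1 hmem).1
      have hui : u i = w i * u (T.parent i) := by
        simp only [hu, if_neg hi, if_neg hpr, hins]
        rw [Finset.filter_insert, if_pos hpr, Finset.prod_insert hnm]
      rw [if_neg hpr, hui]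
      field_simp
  have hOm : ∀ i, i ≠ T.root → -(T.Omega u i) = T.R w i * u i := by
    intro i hi
    rw [BDTree.Omega, BDTree.R, hstep i hi]
    rw [Finset.sum_congr rfl (fun j hj => by
      rw [hsons i hi j hj] :
      ∀ j ∈ T.sons i, T.q i j * (u j - u i) = T.q i j * (u i * w j - u i))]
    have hsum : ∑ j ∈ T.sons i, T.q i j * (u i * w j - u i)
        = -(∑ j ∈ T.sons i, T.q i j * (1 - w j)) * u i := by
      rw [neg_mul, Finset.sum_mul, ← Finset.sum_neg_distrib]
      exact Finset.sum_congr rfl (fun j _ => by ring)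
    rw [hsum]
    ring
  have hband := barta T u f hu0 hupos hf0
  calc T.nonroot.inf' hne (fun i => T.R w i)
      = ∑ i ∈ T.nonroot, T.nonroot.inf' hne (fun i => T.R w i) * (T.mu i * f i ^ 2) := by
        rw [← Finset.mul_sum]
        have : ∑ i ∈ T.nonroot, T.mu i * f i ^ 2 = 1 := hfn
        rw [this, mul_one]
    _ ≤ ∑ i ∈ T.nonroot, T.mu i * (-(T.Omega u i) / u i) * f i ^ 2 := by
        apply Finset.sum_le_sum
        intro i hi
        have hi' := (mem_nonroot T).1 hi
        have hR : -(T.Omega u i) / u i = T.R w i := by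
          rw [hOm i hi', mul_div_assoc, div_self (hupos i hi').ne', mul_one]
        rw [hR, show T.mu i * T.R w i * f i ^ 2 = T.R w i * (T.mu i * f i ^ 2) by ring]
        apply mul_le_mul_of_nonneg_right (Finset.inf'_le _ hi)
        have := mu_pos T i
        positivity
    _ ≤ T.D f := hband

-- Part E1: quadratic auxiliaries
lemma aux_quad (B C : ℝ) (h : ∀ t : ℝ, 0 ≤ B * t + C * t ^ 2) : B = 0 := by
  by_contra hB
  have hB2 : 0 < B ^ 2 := lt_of_le_of_ne (sq_nonneg B) (Ne.symm (pow_ne_zero 2 hB))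
  have hCpos : (0:ℝ) < |C| + 1 := by positivity
  have h1 := h (-B / (2 * (|C| + 1)))
  have e : B * (-B / (2 * (|C| + 1))) + C * (-B / (2 * (|C| + 1))) ^ 2
      = B ^ 2 * (C - 2 * (|C| + 1)) / (4 * (|C| + 1) ^ 2) := by
    field_simp
    ring
  rw [e] at h1
  have hden : (0:ℝ) < 4 * (|C| + 1) ^ 2 := by positivity
  have hnum : 0 ≤ B ^ 2 * (C - 2 * (|C| + 1)) := by
    by_contra hc
    push_neg at hc
    exact absurd h1 (not_le.2 (div_neg_of_neg_of_pos hc hden))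
  nlinarith [le_abs_self C]

lemma D_expand (f e : V → ℝ) (t : ℝ) :
    T.D (fun i => f i + t * e i) = T.D f
      + 2 * t * (∑ i ∈ T.nonroot, T.mu i * T.q i (T.parent i) *
          ((f i - f (T.parent i)) * (e i - e (T.parent i))))
      + t ^ 2 * T.D e := by
  rw [BDTree.D, BDTree.D, BDTree.D, Finset.mul_sum, Finset.mul_sum,
    ← Finset.sum_add_distrib, ← Finset.sum_add_distrib]
  exact Finset.sum_congr rfl fun i _ => by ring

lemma norm2_expand (f e : V → ℝ) (t : ℝ) :
    T.norm2 (fun i => f i + t * e i) = T.norm2 f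
      + 2 * t * (∑ i ∈ T.nonroot, T.mu i * (f i * e i)) + t ^ 2 * T.norm2 e := by
  rw [BDTree.norm2, BDTree.norm2, BDTree.norm2, Finset.mul_sum, Finset.mul_sum,
    ← Finset.sum_add_distrib, ← Finset.sum_add_distrib]
  exact Finset.sum_congr rfl fun i _ => by ring

lemma D_smul (c : ℝ) (f : V → ℝ) : T.D (fun i => c * f i) = c ^ 2 * T.D f := by
  rw [BDTree.D, BDTree.D, Finset.mul_sum]
  exact Finset.sum_congr rfl fun i _ => by ring

lemma norm2_smul (c : ℝ) (f : V → ℝ) : T.norm2 (fun i => c * f i) = c ^ 2 * T.norm2 f := by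
  rw [BDTree.norm2, BDTree.norm2, Finset.mul_sum]
  exact Finset.sum_congr rfl fun i _ => by ring

lemma norm2_nonneg (f : V → ℝ) : 0 ≤ T.norm2 f :=
  Finset.sum_nonneg fun i _ => by have := (mu_pos T i); positivity

lemma norm2_indicator {i0 : V} (hi0 : i0 ≠ T.root) :
    T.norm2 (fun j => if j = i0 then (Real.sqrt (T.mu i0))⁻¹ else 0) = 1 := by
  have hi0m : i0 ∈ T.nonroot := (mem_nonroot T).2 hi0
  rw [BDTree.norm2, Finset.sum_eq_single_of_mem i0 hi0m (fun j _ hj => by simp [hj])]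
  rw [if_pos rfl, ← Real.sqrt_inv, Real.sq_sqrt (inv_nonneg.2 (mu_pos T i0).le),
    mul_inv_cancel₀ (mu_pos T i0).ne']

lemma D_eq_zero_iff (f : V → ℝ) (hf0 : f T.root = 0) (hD : T.D f = 0) : ∀ i, f i = 0 := by
  have hterm : ∀ i ∈ T.nonroot, f i = f (T.parent i) := by
    intro i hi
    have hi' := (mem_nonroot T).1 hi
    have hz := (Finset.sum_eq_zero_iff_of_nonneg (fun j hj => by
      have hj' := (mem_nonroot T).1 hj
      have h1 := mul_pos (mu_pos T j) (T.q_pos_up j hj')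
      positivity)).1 hD i hi
    have hpos := mul_pos (mu_pos T i) (T.q_pos_up i hi')
    have hsq : (f i - f (T.parent i)) ^ 2 = 0 := by
      rcases mul_eq_zero.1 hz with h | h
      · exact absurd h hpos.ne'
      · exact h
    have h2 : f i - f (T.parent i) = 0 := by
      have := sq_eq_zero_iff.1 hsq
      exact this
    linarith
  have key : ∀ n i, T.parent^[n] i = T.root → f i = 0 := by
    intro n
    induction n with
    | zero => intro i hi; rw [show i = T.root from hi, hf0]
    | succ n ih =>
      intro i hi
      by_cases hir : i = T.root
      · rw [hir, hf0]
      · rw [hterm i ((mem_nonroot T).2 hir)]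
        exact ih (T.parent i) (by rwa [Function.iterate_succ_apply] at hi)
  intro i
  obtain ⟨n, hn⟩ := T.reach i
  exact key n i hn

-- Part E2: existence of a minimizer on a branch
lemma exists_min (a : V) (ha : a ≠ T.root) :
    ∃ g : V → ℝ, ((∀ i, i ∉ T.subtree a → g i = 0) ∧ T.norm2 g = 1) ∧
      ∀ f : V → ℝ, ((∀ i, i ∉ T.subtree a → f i = 0) ∧ T.norm2 f = 1) → T.D g ≤ T.D f := by
  classical
  set K : Set (V → ℝ) := {f | (∀ i, i ∉ T.subtree a → f i = 0) ∧ T.norm2 f = 1} with hK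
  have haA : a ∈ T.subtree a := mem_subtree_self T a
  have hKne : K.Nonempty := by
    refine ⟨fun j => if j = a then (Real.sqrt (T.mu a))⁻¹ else 0,
      fun i hi => if_neg (by rintro rfl; exact hi haA), norm2_indicator T ha⟩
  have hcontN : Continuous fun f : V → ℝ => T.norm2 f :=
    continuous_finset_sum _ (fun i _ => continuous_const.mul ((continuous_apply i).pow 2))
  have hcontD : Continuous fun f : V → ℝ => T.D f := by
    apply continuous_finset_sum
    intro i _
    exact continuous_const.mul
      (((continuous_apply i).sub (continuous_apply (T.parent i))).pow 2)
  have hcl : IsClosed K := by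
    have h1 : K = (⋂ i, ⋂ (_ : i ∉ T.subtree a), {f : V → ℝ | f i = 0})
        ∩ {f : V → ℝ | T.norm2 f = 1} := by
      ext f
      simp [hK, Set.mem_iInter]
    rw [h1]
    exact IsClosed.inter
      (isClosed_iInter fun i => isClosed_iInter fun _ =>
        isClosed_eq (continuous_apply i) continuous_const)
      (isClosed_eq hcontN continuous_const)
  set M : ℝ := ∑ i ∈ T.nonroot, (T.mu i)⁻¹ with hM
  have hbdd : Bornology.IsBounded K := by
    apply (Metric.isBounded_closedBall (x := (0 : V → ℝ)) (r := Real.sqrt M)).subset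
    intro f hf
    rw [Metric.mem_closedBall]
    rw [dist_pi_le_iff (Real.sqrt_nonneg M)]
    intro i
    rw [Real.dist_eq, Pi.zero_apply, sub_zero]
    by_cases hiA : i ∈ T.subtree a
    · have hinr : i ∈ T.nonroot := (mem_nonroot T).2 (subtree_nonroot T ha hiA)
      have h1 : T.mu i * f i ^ 2 ≤ 1 := by
        rw [← hf.2]
        exact Finset.single_le_sum (f := fun j => T.mu j * f j ^ 2)
          (fun j _ => by have := mu_pos T j; positivity) hinr
      have h2 : f i ^ 2 ≤ (T.mu i)⁻¹ := by
        rw [← one_div, le_div_iff₀ (mu_pos T i)]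
        linarith [h1, mul_comm (T.mu i) (f i ^ 2)]
      have h3 : (T.mu i)⁻¹ ≤ M := by
        exact Finset.single_le_sum (f := fun j => (T.mu j)⁻¹)
          (fun j _ => inv_nonneg.2 (mu_pos T j).le) hinr
      calc |f i| = Real.sqrt (f i ^ 2) := (Real.sqrt_sq_eq_abs (f i)).symm
        _ ≤ Real.sqrt M := Real.sqrt_le_sqrt (by linarith)
    · rw [hf.1 i hiA]
      simp [Real.sqrt_nonneg]
  have hKc : IsCompact K := Metric.isCompact_of_isClosed_isBounded hcl hbdd
  obtain ⟨g, hgK, hgmin⟩ := hKc.exists_isMinOn hKne hcontD.continuousOn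
  exact ⟨g, hgK, fun f hf => hgmin hf⟩

-- Part E3: the branch eigenfunction
lemma branch (a : V) (ha : a ≠ T.root) :
    ∃ lam : ℝ, ∃ g : V → ℝ, T.lam0 ≤ lam ∧
      (∀ i, i ∉ T.subtree a → g i = 0) ∧
      (∀ i ∈ T.subtree a, 0 < g i) ∧
      (∀ i ∈ T.subtree a, g (T.parent i) < g i) ∧
      (∀ i ∈ T.subtree a, -(T.Omega g i) = lam * g i) := by
  classical
  obtain ⟨g0, hg0K, hg0min⟩ := exists_min T a ha
  set g : V → ℝ := fun i => |g0 i| with hg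
  have hgv : ∀ i, i ∉ T.subtree a → g i = 0 := fun i hi => by
    simp [hg, hg0K.1 i hi]
  have hgn2 : T.norm2 g = 1 := by
    rw [← hg0K.2, BDTree.norm2, BDTree.norm2]
    exact Finset.sum_congr rfl fun i _ => by simp [hg, sq_abs]
  have hgmin : ∀ f : V → ℝ, ((∀ i, i ∉ T.subtree a → f i = 0) ∧ T.norm2 f = 1) →
      T.D g ≤ T.D f := by
    intro f hf
    refine le_trans ?_ (hg0min f hf)
    apply Finset.sum_le_sum
    intro i hi
    have hi' := (mem_nonroot T).1 hi
    have hc : (0:ℝ) ≤ T.mu i * T.q i (T.parent i) :=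
      (mul_pos (mu_pos T i) (T.q_pos_up i hi')).le
    apply mul_le_mul_of_nonneg_left _ hc
    have h1 : |g0 i| * |g0 (T.parent i)| = |g0 i * g0 (T.parent i)| := (abs_mul _ _).symm
    nlinarith [le_abs_self (g0 i * g0 (T.parent i)), sq_abs (g0 i), sq_abs (g0 (T.parent i))]
  have hgnn : ∀ i, 0 ≤ g i := fun i => abs_nonneg _
  set lam : ℝ := T.D g with hlam
  have hroot_nmem : T.root ∉ T.subtree a := root_not_mem_subtree T ha
  have hg_root : g T.root = 0 := hgv _ hroot_nmem
  have hlam_ge : T.lam0 ≤ lam := by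
    apply csInf_le
    · exact ⟨0, by rintro r ⟨f, -, -, rfl⟩; exact D_nonneg T f⟩
    · exact ⟨g, hg_root, hgn2, rfl⟩
  -- variational inequality
  have hvar : ∀ f : V → ℝ, (∀ i, i ∉ T.subtree a → f i = 0) →
      lam * T.norm2 f ≤ T.D f := by
    intro f hfv
    by_cases hn : T.norm2 f = 0
    · rw [hn, mul_zero]; exact D_nonneg T f
    · have hnpos : 0 < T.norm2 f := lt_of_le_of_ne (norm2_nonneg T f) (Ne.symm hn)
      set c : ℝ := (Real.sqrt (T.norm2 f))⁻¹ with hc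
      have hsq : c ^ 2 = (T.norm2 f)⁻¹ := by
        rw [hc, ← Real.sqrt_inv, Real.sq_sqrt (inv_nonneg.2 hnpos.le)]
      have hmem : ((∀ i, i ∉ T.subtree a → c * f i = 0) ∧
          T.norm2 (fun i => c * f i) = 1) := by
        constructor
        · intro i hi; rw [hfv i hi, mul_zero]
        · rw [norm2_smul, hsq, inv_mul_cancel₀ hn]
      have h1 := hgmin _ hmem
      rw [D_smul, hsq] at h1
      have h2 := mul_le_mul_of_nonneg_right h1 hnpos.le
      rw [inv_mul_eq_div, div_mul_cancel₀ _ hn] at h2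
      exact h2
  -- eigen-equation
  have heig : ∀ i ∈ T.subtree a, -(T.Omega g i) = lam * g i := by
    intro i hiA
    have hinr : i ≠ T.root := subtree_nonroot T ha hiA
    have hinr' : i ∈ T.nonroot := (mem_nonroot T).2 hinr
    set e : V → ℝ := fun j => if j = i then 1 else 0 with he
    have hev : ∀ j, j ∉ T.subtree a → e j = 0 := fun j hj =>
      if_neg (by rintro rfl; exact hj hiA)
    set Dbil : ℝ := ∑ k ∈ T.nonroot, T.mu k * T.q k (T.parent k) *
        ((g k - g (T.parent k)) * (e k - e (T.parent k))) with hDbil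
    set Nbil : ℝ := ∑ k ∈ T.nonroot, T.mu k * (g k * e k) with hNbil
    have hq : ∀ t : ℝ, 0 ≤ (2 * (Dbil - lam * Nbil)) * t
        + (T.D e - lam * T.norm2 e) * t ^ 2 := by
      intro t
      have hfv : ∀ j, j ∉ T.subtree a → g j + t * e j = 0 := fun j hj => by
        rw [hgv j hj, hev j hj]; ring
      have h1 := hvar (fun j => g j + t * e j) hfv
      rw [D_expand, norm2_expand, hgn2] at h1
      rw [← hDbil, ← hNbil] at h1
      nlinarith [h1]
    have hB0 : Dbil - lam * Nbil = 0 := by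
      have := aux_quad _ _ hq
      linarith
    -- compute Nbil
    have hN : Nbil = T.mu i * g i := by
      rw [hNbil, Finset.sum_eq_single_of_mem i hinr'
        (fun j _ hj => by simp [he, hj])]
      simp [he]
    -- compute Dbil
    set c : V → ℝ := fun k => T.mu k * T.q k (T.parent k) * (g k - g (T.parent k)) with hcd
    have hD1 : Dbil = (∑ k ∈ T.nonroot, c k * e k) - ∑ k ∈ T.nonroot, c k * e (T.parent k) := by
      rw [hDbil, ← Finset.sum_sub_distrib]
      exact Finset.sum_congr rfl fun k _ => by simp only [hcd]; ring
    have hD2 : ∑ k ∈ T.nonroot, c k * e k = c i := by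
      rw [Finset.sum_eq_single_of_mem i hinr' (fun j _ hj => by simp [he, hj])]
      simp [he]
    have hD3 : ∑ k ∈ T.nonroot, c k * e (T.parent k) = ∑ k ∈ T.sons i, c k := by
      rw [show ∑ k ∈ T.nonroot, c k * e (T.parent k)
          = ∑ k ∈ T.nonroot.filter (fun k => T.parent k = i), c k by
        rw [Finset.sum_filter]
        exact Finset.sum_congr rfl fun k _ => by
          by_cases hk : T.parent k = i <;> simp [he, hk]]
      apply Finset.sum_congr _ (fun _ _ => rfl)
      ext k
      simp [mem_sons T, BDTree.nonroot, Finset.mem_filter, and_comm]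
    have hsons : ∑ k ∈ T.sons i, c k = T.mu i * ∑ k ∈ T.sons i, T.q i k * (g k - g i) := by
      rw [Finset.mul_sum]
      apply Finset.sum_congr rfl
      intro k hk
      obtain ⟨hk1, hk2⟩ := (mem_sons T).1 hk
      simp only [hcd]
      rw [show T.mu k * T.q k (T.parent k) * (g k - g (T.parent k))
          = T.mu k * T.q k (T.parent k) * (g k - g i) by rw [hk2],
        mu_parent_eq T hk1, hk2]
      ring
    have hfinal : T.mu i * (-(T.Omega g i)) = T.mu i * (lam * g i) := by
      have : Dbil = T.mu i * (-(T.Omega g i)) := by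
        rw [hD1, hD2, hD3, hsons, BDTree.Omega]
        simp only [hcd]
        ring
      rw [← this]
      have hDN : Dbil = lam * Nbil := by linarith
      rw [hDN, hN]
      ring
    have := mul_left_cancel₀ (mu_pos T i).ne' hfinal
    exact this
  -- lam > 0
  have hlampos : 0 < lam := by
    rcases lt_or_eq_of_le (D_nonneg T g) with h | h
    · exact h
    · exfalso
      have hz := D_eq_zero_iff T g hg_root h.symm
      have : T.norm2 g = 0 := by
        rw [BDTree.norm2]
        exact Finset.sum_eq_zero fun i _ => by rw [hz i]; ring
      rw [hgn2] at this
      norm_num at this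
  -- subtree summation identity
  set F : V → ℝ := fun k => T.mu k * T.q k (T.parent k) * (g k - g (T.parent k)) with hF
  have hkey : ∀ i ∈ T.subtree a,
      F i = lam * ∑ j ∈ T.subtree i, T.mu j * g j := by
    intro i hiA
    have hsubA : ∀ j ∈ T.subtree i, j ∈ T.subtree a := fun j hj => subtree_trans T hj hiA
    have hinr : i ≠ T.root := subtree_nonroot T ha hiA
    have hterm : ∀ j ∈ T.subtree i, F j - ∑ k ∈ T.sons j, F k = lam * (T.mu j * g j) := by
      intro j hj
      have hjA := hsubA j hj
      have hOe := heig j hjA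
      have hs : ∑ k ∈ T.sons j, F k = T.mu j * ∑ k ∈ T.sons j, T.q j k * (g k - g j) := by
        rw [Finset.mul_sum]
        apply Finset.sum_congr rfl
        intro k hk
        obtain ⟨hk1, hk2⟩ := (mem_sons T).1 hk
        simp only [hF]
        rw [show T.mu k * T.q k (T.parent k) * (g k - g (T.parent k))
            = T.mu k * T.q k (T.parent k) * (g k - g j) by rw [hk2],
          mu_parent_eq T hk1, hk2]
        ring
      rw [hs, show lam * (T.mu j * g j) = T.mu j * (lam * g j) by ring, ← hOe,
        BDTree.Omega]
      simp only [hF]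
      ring
    have hsum := Finset.sum_congr rfl hterm
    rw [Finset.sum_sub_distrib, sum_subtree_sons T hinr F,
      ← Finset.add_sum_erase _ F (mem_subtree_self T i)] at hsum
    rw [show F i + ∑ k ∈ (T.subtree i).erase i, F k - ∑ k ∈ (T.subtree i).erase i, F k
        = F i by ring] at hsum
    rw [hsum, ← Finset.mul_sum]
  -- zero propagation upwards
  have hSnn : ∀ i, 0 ≤ ∑ j ∈ T.subtree i, T.mu j * g j :=
    fun i => Finset.sum_nonneg fun j _ => mul_nonneg (mu_pos T j).le (hgnn j)
  have hup : ∀ n i, i ∈ T.subtree a → T.parent^[n] i = a → g i = 0 → g a = 0 := by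
    intro n
    induction n with
    | zero => intro i _ hit hgi; rwa [show i = a from hit] at hgi
    | succ n ih =>
      intro i hiA hit hgi
      by_cases hia : i = a
      · rwa [hia] at hgi
      · have hpA := parent_mem_subtree T ha hiA hia
        have hk := hkey i hiA
        simp only [hF, hgi] at hk
        have hS := hSnn i
        have hqp := T.q_pos_up i (subtree_nonroot T ha hiA)
        have hmp := mu_pos T i
        have hgp : g (T.parent i) = 0 := by
          refine le_antisymm ?_ (hgnn _)
          by_contra hc
          push_neg at hc
          have hpos := mul_pos (mul_pos hmp hqp) hc
          nlinarith [mul_nonneg hlampos.le hS]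
        exact ih (T.parent i) hpA (by rwa [Function.iterate_succ_apply] at hit) hgp
  -- g a > 0
  have hpa_nmem : T.parent a ∉ T.subtree a := by
    intro hmem
    obtain ⟨n, hn⟩ := (mem_subtree T).1 hmem
    exact no_cycle T ha n (by rwa [Function.iterate_succ_apply])
  have hgpa : g (T.parent a) = 0 := hgv _ hpa_nmem
  have hga : 0 < g a := by
    rcases lt_or_eq_of_le (hgnn a) with h | h
    · exact h
    · exfalso
      have hk := hkey a (mem_subtree_self T a)
      simp only [hF, ← h, hgpa] at hk
      have hS0 : ∑ j ∈ T.subtree a, T.mu j * g j = 0 := by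
        refine le_antisymm ?_ (hSnn a)
        by_contra hc
        push_neg at hc
        have := mul_pos hlampos hc
        nlinarith [hk]
      have hz : ∀ j ∈ T.subtree a, g j = 0 := by
        intro j hj
        have := (Finset.sum_eq_zero_iff_of_nonneg
          (fun j _ => mul_nonneg (mu_pos T j).le (hgnn j))).1 hS0 j hj
        have hm := (mu_pos T j).ne'
        rcases mul_eq_zero.1 this with h' | h'
        · exact absurd h' hm
        · exact h'
      have : T.norm2 g = 0 := by
        rw [BDTree.norm2]
        apply Finset.sum_eq_zero
        intro i _
        by_cases hiA : i ∈ T.subtree a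
        · rw [hz i hiA]; ring
        · rw [hgv i hiA]; ring
      rw [hgn2] at this
      norm_num at this
  -- strict positivity
  have hgpos : ∀ i ∈ T.subtree a, 0 < g i := by
    intro i hiA
    rcases lt_or_eq_of_le (hgnn i) with h | h
    · exact h
    · exfalso
      obtain ⟨n, hn⟩ := (mem_subtree T).1 hiA
      exact hga.ne' (hup n i hiA hn h.symm)
  -- strict monotonicity
  have hmono : ∀ i ∈ T.subtree a, g (T.parent i) < g i := by
    intro i hiA
    have hk := hkey i hiA
    have hqp := T.q_pos_up i (subtree_nonroot T ha hiA)
    have hmp := mu_pos T i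
    have hSi : 0 < ∑ j ∈ T.subtree i, T.mu j * g j := by
      have h1 : T.mu i * g i ≤ ∑ j ∈ T.subtree i, T.mu j * g j :=
        Finset.single_le_sum (f := fun j => T.mu j * g j)
          (fun j _ => mul_nonneg (mu_pos T j).le (hgnn j)) (mem_subtree_self T i)
      nlinarith [hgpos i hiA]
    simp only [hF] at hk
    by_contra hc
    push_neg at hc
    nlinarith [mul_pos hlampos hSi,
      mul_nonneg (mul_pos hmp hqp).le (by linarith : (0:ℝ) ≤ g (T.parent i) - g i)]
  exact ⟨lam, g, hlam_ge, hgv, hgpos, hmono, heig⟩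

-- Part F: branch covering and uniqueness
lemma exists_branch : ∀ i, i ≠ T.root →
    ∃ a, a ≠ T.root ∧ T.parent a = T.root ∧ i ∈ T.subtree a := by
  have key : ∀ n i, T.parent^[n] i = T.root → i ≠ T.root →
      ∃ a, a ≠ T.root ∧ T.parent a = T.root ∧ i ∈ T.subtree a := by
    intro n
    induction n with
    | zero => intro i h hi; exact absurd h hi
    | succ n ih =>
      intro i h hi
      by_cases hp : T.parent i = T.root
      · exact ⟨i, hi, hp, mem_subtree_self T i⟩
      · obtain ⟨a, ha1, ha2, ha3⟩ :=
          ih (T.parent i) (by rwa [Function.iterate_succ_apply] at h) hp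
        exact ⟨a, ha1, ha2,
          subtree_trans T ha3 ((mem_subtree T).2 ⟨1, by rw [Function.iterate_one]⟩) |> fun _ => by
            exact subtree_trans T ((mem_subtree T).2 ⟨1, by rw [Function.iterate_one]⟩) ha3⟩
  intro i hi
  obtain ⟨n, hn⟩ := T.reach i
  exact key n i hn hi

lemma branch_unique {a a' i : V} (ha1 : a ≠ T.root) (ha : T.parent a = T.root)
    (ha1' : a' ≠ T.root) (ha' : T.parent a' = T.root)
    (hi : i ∈ T.subtree a) (hi' : i ∈ T.subtree a') : a = a' := by
  obtain ⟨n, hn⟩ := (mem_subtree T).1 hi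
  obtain ⟨m, hm⟩ := (mem_subtree T).1 hi'
  have key : ∀ b b' : V, b ≠ T.root → T.parent b = T.root → b' ≠ T.root →
      ∀ n m : ℕ, n ≤ m → T.parent^[n] i = b → T.parent^[m] i = b' → b = b' := by
    intro b b' hb1 hb hb1' n m hnm hn hm
    obtain ⟨k, rfl⟩ := Nat.exists_eq_add_of_le hnm
    rw [add_comm, Function.iterate_add_apply, hn] at hm
    cases k with
    | zero => exact hm
    | succ k =>
      exfalso
      rw [Function.iterate_succ_apply, hb, iter_root] at hm
      exact hb1' hm.symm
  rcases le_total n m with h | h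
  · exact key a a' ha1 ha ha1' n m h hn hm
  · exact (key a' a ha1' ha' ha1 m n h hm hn).symm

theorem stmt18' (hne : T.nonroot.Nonempty) :
    (∀ w, T.memW w → (∀ i, i ≠ T.root → 0 < T.R w i) →
      T.nonroot.inf' hne (fun i => T.R w i) ≤ T.lam0) ∧
    sSup {x | ∃ w, T.memW w ∧ x = T.nonroot.inf' hne fun i => T.R w i} = T.lam0 := by
  classical
  have hpart1 : ∀ w, T.memW w → T.nonroot.inf' hne (fun i => T.R w i) ≤ T.lam0 :=
    fun w hw => part1' T hne w hw
  refine ⟨fun w hw _ => hpart1 w hw, ?_⟩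
  -- build the optimal w
  have H : ∀ a : V, ∃ lam : ℝ, ∃ g : V → ℝ, a ≠ T.root →
      (T.lam0 ≤ lam ∧ (∀ i, i ∉ T.subtree a → g i = 0) ∧
        (∀ i ∈ T.subtree a, 0 < g i) ∧
        (∀ i ∈ T.subtree a, g (T.parent i) < g i) ∧
        (∀ i ∈ T.subtree a, -(T.Omega g i) = lam * g i)) := by
    intro a
    by_cases ha : a = T.root
    · exact ⟨0, 0, fun h => absurd ha h⟩
    · obtain ⟨lam, g, h1, h2, h3, h4, h5⟩ := branch T a ha
      exact ⟨lam, g, fun _ => ⟨h1, h2, h3, h4, h5⟩⟩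
  choose lamF gF hF using H
  set G : V → ℝ := fun i => ∑ b ∈ T.sons T.root, gF b i with hG
  have hGeq : ∀ a, a ≠ T.root → T.parent a = T.root → ∀ i ∈ T.subtree a, G i = gF a i := by
    intro a ha1 ha2 i hi
    have haM : a ∈ T.sons T.root := (mem_sons T).2 ⟨ha1, ha2⟩
    rw [hG]
    apply Finset.sum_eq_single_of_mem a haM
    intro b hb hba
    obtain ⟨hb1, hb2⟩ := (mem_sons T).1 hb
    apply (hF b hb1).2.1
    intro hib
    exact hba (branch_unique T hb1 hb2 ha1 ha2 hib hi)
  have hGroot : G T.root = 0 := by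
    rw [hG]
    apply Finset.sum_eq_zero
    intro b hb
    obtain ⟨hb1, -⟩ := (mem_sons T).1 hb
    exact (hF b hb1).2.1 T.root (root_not_mem_subtree T hb1)
  have hGpos : ∀ i, i ≠ T.root → 0 < G i := by
    intro i hi
    obtain ⟨a, ha1, ha2, hia⟩ := exists_branch T i hi
    rw [hGeq a ha1 ha2 i hia]
    exact (hF a ha1).2.2.1 i hia
  have hGpar : ∀ i, i ≠ T.root → G (T.parent i) < G i := by
    intro i hi
    obtain ⟨a, ha1, ha2, hia⟩ := exists_branch T i hi
    rw [hGeq a ha1 ha2 i hia]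
    by_cases hiaa : i = a
    · subst hiaa
      rw [ha2, hGroot]
      exact (hF i ha1).2.2.1 i hia
    · rw [hGeq a ha1 ha2 _ (parent_mem_subtree T ha1 hia hiaa)]
      exact (hF a ha1).2.2.2.1 i hia
  set w : V → ℝ := fun i => G i / G (T.parent i) with hw
  have hmemW : T.memW w := by
    intro i hi hpi
    rw [hw]
    exact (one_lt_div (hGpos _ hpi)).2 (hGpar i hi)
  have hRval : ∀ i, i ≠ T.root → T.lam0 ≤ T.R w i := by
    intro i hi
    obtain ⟨a, ha1, ha2, hia⟩ := exists_branch T i hi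
    have hGi : G i = gF a i := hGeq a ha1 ha2 i hia
    have hGine : G i ≠ 0 := (hGpos i hi).ne'
    have hGp : G (T.parent i) = gF a (T.parent i) := by
      by_cases hiaa : i = a
      · subst hiaa
        rw [ha2, hGroot, ((hF i ha1).2.1 T.root (root_not_mem_subtree T ha1))]
      · exact hGeq a ha1 ha2 _ (parent_mem_subtree T ha1 hia hiaa)
    have hOmeq : T.Omega G i = T.Omega (gF a) i := by
      rw [BDTree.Omega, BDTree.Omega, hGi, hGp]
      congr 1
      apply Finset.sum_congr rfl
      intro j hj
      rw [hGeq a ha1 ha2 j (sons_mem_subtree T hia hj)]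
    have hmain : T.R w i * G i = -(T.Omega G i) := by
      rw [BDTree.R, BDTree.Omega, add_mul, Finset.sum_mul]
      have hsons : ∀ j ∈ T.sons i, T.q i j * (1 - w j) * G i = -(T.q i j * (G j - G i)) := by
        intro j hj
        obtain ⟨-, hj2⟩ := (mem_sons T).1 hj
        rw [hw]
        simp only [hj2]
        field_simp
        ring
      rw [Finset.sum_congr rfl hsons, Finset.sum_neg_distrib]
      have hfirst : T.q i (T.parent i) * (1 - if T.parent i = T.root then 0 else (w i)⁻¹) * G i
          = -(T.q i (T.parent i) * (G (T.parent i) - G i)) := by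
        by_cases hpr : T.parent i = T.root
        · rw [if_pos hpr, hpr, hGroot]
          ring
        · rw [if_neg hpr, hw]
          have := (hGpos _ hpr).ne'
          simp only
          rw [inv_div]
          field_simp
          ring
      rw [hfirst]
      ring
    have heq : T.R w i * G i = lamF a * G i := by
      rw [hmain, hOmeq, (hF a ha1).2.2.2.2 i hia, hGi]
    have : T.R w i = lamF a := mul_right_cancel₀ hGine heq
    rw [this]
    exact (hF a ha1).1
  set Sset : Set ℝ := {x | ∃ w', T.memW w' ∧ x = T.nonroot.inf' hne fun i => T.R w' i}
    with hSset
  have hub : ∀ x ∈ Sset, x ≤ T.lam0 := by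
    rintro x ⟨w', hw', rfl⟩
    exact hpart1 w' hw'
  have hmem : (T.nonroot.inf' hne fun i => T.R w i) ∈ Sset := ⟨w, hmemW, rfl⟩
  apply le_antisymm
  · exact Real.sSup_le hub (lam0_nonneg T hne)
  · calc T.lam0 ≤ T.nonroot.inf' hne fun i => T.R w i :=
        Finset.le_inf' hne _ (fun i hi => hRval i ((mem_nonroot T).1 hi))
      _ ≤ sSup Sset := le_csSup ⟨T.lam0, hub⟩ hmem

end Aux
end Stmt18Proof

/-- the difference-form lower bound: each `w ∈ W` with `R(w) > 0` gives
`inf R(w) ≤ λ₀`, and `sup_{w∈W} inf_i R_i(w) = λ₀`. -/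
theorem stmt18 {V : Type*} [Fintype V] (T : BDTree V) (hne : T.nonroot.Nonempty) :
    (∀ w, T.memW w → (∀ i, i ≠ T.root → 0 < T.R w i) →
      T.nonroot.inf' hne (fun i => T.R w i) ≤ T.lam0) ∧
    sSup {x | ∃ w, T.memW w ∧ x = T.nonroot.inf' hne fun i => T.R w i} = T.lam0 := by
  exact Stmt18Proof.stmt18' T hne
end
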